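/- Let α ∈ (0,1], let p : [0,π] → ℝ be continuously differentiable, set Q(x) = ∫₀^x t^{α−1} p(t) dt, and let λ ∈ ℝ satisfy λ ≠ p(x) for all x ∈ [0,π]. Then each of the functions y₁(x) = cos( (λ/α) x^α − Q(x) ) and y₂(x) = sin( (λ/α) x^α − Q(x) ) satisfies the differential equation D^α(D^α y)(x) + ( D^α p(x)/(λ − p(x)) ) · D^α y(x) + (λ − p(x))² y(x) = 0 for x ∈ (0,π), and their α-Wronskian y₁(x) D^α y₂(x) − y₂(x) D^α y₁(x) equals λ − p(x), which is nonzero; hence {y₁, y₂} is a fundamental system of solutions of this equation. -/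

import Mathlib

open Real MeasureTheory Set

/-- The conformable fractional derivative of order `α`: `Dᵅ f x = x^(1-α) * f' x`. -/
noncomputable def confDeriv (α : ℝ) (f : ℝ → ℝ) (x : ℝ) : ℝ :=
  x ^ (1 - α) * deriv f x

theorem fundamental_system_of_homogeneous_equation
    (α : ℝ) (hα : α ∈ Set.Ioc (0 : ℝ) 1)
    (p p' : ℝ → ℝ)
    (hp : ∀ x ∈ Set.Icc 0 π, HasDerivAt p (p' x) x)
    (hp' : ContinuousOn p' (Set.Icc 0 π))
    (lam : ℝ) (hlam : ∀ x ∈ Set.Icc 0 π, lam ≠ p x)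
    (Q : ℝ → ℝ) (hQ : ∀ x, Q x = ∫ t in (0:ℝ)..x, t ^ (α - 1) * p t)
    (y₁ y₂ : ℝ → ℝ)
    (hy₁ : y₁ = fun x : ℝ => Real.cos (lam / α * x ^ α - Q x))
    (hy₂ : y₂ = fun x : ℝ => Real.sin (lam / α * x ^ α - Q x)) :
    ∀ x ∈ Set.Ioo 0 π,
      (confDeriv α (confDeriv α y₁) x
          + confDeriv α p x / (lam - p x) * confDeriv α y₁ x
          + (lam - p x) ^ 2 * y₁ x = 0)
      ∧ (confDeriv α (confDeriv α y₂) x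
          + confDeriv α p x / (lam - p x) * confDeriv α y₂ x
          + (lam - p x) ^ 2 * y₂ x = 0)
      ∧ y₁ x * confDeriv α y₂ x - y₂ x * confDeriv α y₁ x = lam - p x
      ∧ lam - p x ≠ 0 := by
  obtain ⟨hα0, hα1⟩ := hα
  have hαne : α ≠ 0 := ne_of_gt hα0
  set φ : ℝ → ℝ := fun u => lam / α * u ^ α - Q u with hφdef
  have hy₁' : y₁ = fun u => Real.cos (φ u) := hy₁
  have hy₂' : y₂ = fun u => Real.sin (φ u) := hy₂
  set s : Set ℝ := Set.Ioo (0:ℝ) π with hs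
  have hsopen : IsOpen s := isOpen_Ioo
  have hsub : s ⊆ Set.Icc 0 π := Set.Ioo_subset_Icc_self
  have hpc : ContinuousOn p (Set.Icc 0 π) := fun z hz =>
    (hp z hz).continuousAt.continuousWithinAt
  -- continuity of the integrand on s
  have hcont : ContinuousOn (fun t => t ^ (α - 1) * p t) s := by
    apply ContinuousOn.mul
    · exact fun t ht => ((Real.continuousAt_rpow_const t (α-1)
        (Or.inl (ne_of_gt ht.1)))).continuousWithinAt
    · exact hpc.mono hsub
  -- derivative of Q on s
  have hQd : ∀ z ∈ s, HasDerivAt Q (z ^ (α - 1) * p z) z := by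
    intro z hz
    have hz0 : (0:ℝ) < z := hz.1
    have hQfun : Q = fun u => ∫ t in (0:ℝ)..u, t ^ (α - 1) * p t := funext hQ
    rw [hQfun]
    have hint : IntervalIntegrable (fun t => t ^ (α - 1) * p t) volume 0 z := by
      apply (intervalIntegral.intervalIntegrable_rpow' (by linarith)).mul_continuousOn
      apply hpc.mono
      rw [Set.uIcc_of_le hz0.le]
      exact Set.Icc_subset_Icc_right hz.2.le
    exact intervalIntegral.integral_hasDerivAt_right hint
      (hcont.stronglyMeasurableAtFilter hsopen z hz)
      (hcont.continuousAt (hsopen.mem_nhds hz))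
  -- derivative of φ on s
  have hφd : ∀ z ∈ s, HasDerivAt φ ((lam - p z) * z ^ (α - 1)) z := by
    intro z hz
    have h1 := (Real.hasDerivAt_rpow_const (x := z) (p := α)
      (Or.inl (ne_of_gt hz.1))).const_mul (lam / α)
    have h2 := h1.sub (hQd z hz)
    refine h2.congr_deriv ?_
    rw [← mul_assoc, div_mul_cancel₀ _ hαne]
    ring
  have hxx : ∀ z ∈ s, z ^ (1 - α) * z ^ (α - 1) = 1 := by
    intro z hz
    rw [← Real.rpow_add hz.1]
    norm_num
  -- conformable derivatives of y₁, y₂ on s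
  have hy1d : ∀ z ∈ s, HasDerivAt y₁
      (-Real.sin (φ z) * ((lam - p z) * z ^ (α - 1))) z := by
    intro z hz; rw [hy₁']; exact (hφd z hz).cos
  have hy2d : ∀ z ∈ s, HasDerivAt y₂
      (Real.cos (φ z) * ((lam - p z) * z ^ (α - 1))) z := by
    intro z hz; rw [hy₂']; exact (hφd z hz).sin
  have hc1 : ∀ z ∈ s, confDeriv α y₁ z = -(lam - p z) * Real.sin (φ z) := by
    intro z hz
    rw [confDeriv, (hy1d z hz).deriv]
    linear_combination (-(lam - p z) * Real.sin (φ z)) * hxx z hz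
  have hc2 : ∀ z ∈ s, confDeriv α y₂ z = (lam - p z) * Real.cos (φ z) := by
    intro z hz
    rw [confDeriv, (hy2d z hz).deriv]
    linear_combination ((lam - p z) * Real.cos (φ z)) * hxx z hz
  intro x hx
  have hxmem : x ∈ Set.Icc 0 π := hsub hx
  have hx0 : (0:ℝ) < x := hx.1
  have hne : lam - p x ≠ 0 := sub_ne_zero.mpr (hlam x hxmem)
  have hxx' := hxx x hx
  -- second conformable derivatives
  have hg1 : HasDerivAt (fun z => -(lam - p z) * Real.sin (φ z))
      (p' x * Real.sin (φ x) + -(lam - p x) * (Real.cos (φ x) * ((lam - p x) * x ^ (α - 1)))) x := by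
    have h1 : HasDerivAt (fun z => -(lam - p z)) (p' x) x := by
      have := ((hp x hxmem).const_sub lam).neg
      simpa using hp x hxmem
    exact h1.mul (hφd x hx).sin
  have hg2 : HasDerivAt (fun z => (lam - p z) * Real.cos (φ z))
      (-p' x * Real.cos (φ x) + (lam - p x) * (-Real.sin (φ x) * ((lam - p x) * x ^ (α - 1)))) x := by
    have h1 : HasDerivAt (fun z => lam - p z) (-p' x) x := by
      simpa using (hp x hxmem).const_sub lam
    exact h1.mul (hφd x hx).cos
  have hE1 : confDeriv α y₁ =ᶠ[nhds x] fun z => -(lam - p z) * Real.sin (φ z) :=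
    Filter.eventuallyEq_of_mem (hsopen.mem_nhds hx) (fun z hz => hc1 z hz)
  have hE2 : confDeriv α y₂ =ᶠ[nhds x] fun z => (lam - p z) * Real.cos (φ z) :=
    Filter.eventuallyEq_of_mem (hsopen.mem_nhds hx) (fun z hz => hc2 z hz)
  have hd1 : deriv (confDeriv α y₁) x
      = p' x * Real.sin (φ x) + -(lam - p x) * (Real.cos (φ x) * ((lam - p x) * x ^ (α - 1))) := by
    rw [hE1.deriv_eq, hg1.deriv]
  have hd2 : deriv (confDeriv α y₂) x
      = -p' x * Real.cos (φ x) + (lam - p x) * (-Real.sin (φ x) * ((lam - p x) * x ^ (α - 1))) := by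
    rw [hE2.deriv_eq, hg2.deriv]
  have hdp : deriv p x = p' x := (hp x hxmem).deriv
  have hy₁x : y₁ x = Real.cos (φ x) := by rw [hy₁']
  have hy₂x : y₂ x = Real.sin (φ x) := by rw [hy₂']
  refine ⟨?_, ?_, ?_, hne⟩
  · rw [show confDeriv α (confDeriv α y₁) x = x ^ (1-α) * deriv (confDeriv α y₁) x from rfl,
      hd1, show confDeriv α p x = x ^ (1-α) * deriv p x from rfl, hdp, hc1 x hx, hy₁x]
    field_simp
    linear_combination (-(lam - p x)^2 * Real.cos (φ x)) * hxx'
  · rw [show confDeriv α (confDeriv α y₂) x = x ^ (1-α) * deriv (confDeriv α y₂) x from rfl,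
      hd2, show confDeriv α p x = x ^ (1-α) * deriv p x from rfl, hdp, hc2 x hx, hy₂x]
    field_simp
    linear_combination (-(lam - p x)^2 * Real.sin (φ x)) * hxx'
  · rw [hc1 x hx, hc2 x hx, hy₁x, hy₂x]
    linear_combination (lam - p x) * Real.sin_sq_add_cos_sq (φ x)
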